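/- Let (A, [·,·], ∧) be a Gerstenhaber algebra, E the graded vector space with E_{−k} := A^k, and 𝒩_k the symmetric vector valued k-form 𝒩_k(P_1,…,P_k) := P_1∧⋯∧P_k. Then for all positive integers i, j: [𝒩_i, 𝒩_j]_RN = ((j−i)(i+j−1)!/(i!·j!)) 𝒩_{i+j−1}. -/

import Mathlib

open Finset

section Framework

variable {V : Type*} [AddCommGroup V] [Module ℝ V]

/-- The Koszul sign `ε(σ)` of a permutation `σ` acting on homogeneous elements whose
degrees are given by `d`. -/
def koszulSign {n : ℕ} (d : Fin n → ℤ) (σ : Equiv.Perm (Fin n)) : ℤ :=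
  ∏ p ∈ Finset.univ.filter (fun p : Fin n × Fin n => p.1 < p.2 ∧ σ p.2 < σ p.1),
    (-1 : ℤ) ^ (d (σ p.1) * d (σ p.2)).natAbs

/-- The `(k, n-k)`-unshuffles: permutations of `Fin n` which are increasing on the
first `k` indices and on the remaining ones. -/
def unshuffles (k n : ℕ) : Finset (Equiv.Perm (Fin n)) :=
  Finset.univ.filter (fun σ =>
    (∀ i j : Fin n, i < j → (j : ℕ) < k → σ i < σ j) ∧
    (∀ i j : Fin n, i < j → k ≤ (i : ℕ) → σ i < σ j))

/-- A (raw) vector valued `k`-form on the graded vector space with grading `𝒢`: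
it assigns, to homogeneous elements of degrees `d 0, …, d (k-1)`, an element of `V`. -/
abbrev GForm (𝒢 : ℤ → Submodule ℝ V) (k : ℕ) : Type _ :=
  (d : Fin k → ℤ) → ((i : Fin k) → 𝒢 (d i)) → V

/-- Transport of a vector valued form along an equality of arities. -/
def castForm {𝒢 : ℤ → Submodule ℝ V} {m n : ℕ} (h : m = n) (K : GForm 𝒢 m) : GForm 𝒢 n :=
  h ▸ K

variable (𝒢 : ℤ → Submodule ℝ V)

/-- Projection on the homogeneous component of degree `i`. -/
def prj [DirectSum.Decomposition 𝒢] (i : ℤ) (v : V) : 𝒢 i :=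
  DirectSum.decompose 𝒢 v i

/-- Insertion of a `k`-form `K` of degree `δK` into an `(l+1)`-form `L`:
`ι_K L (X_1,…,X_{k+l}) = Σ_{σ ∈ Sh(k,l)} ε(σ) L(K(X_{σ(1)},…,X_{σ(k)}), X_{σ(k+1)},…)`. -/
def insertPos [DirectSum.Decomposition 𝒢] {k l : ℕ} (δK : ℤ) (K : GForm 𝒢 k)
    (L : GForm 𝒢 (l + 1)) : GForm 𝒢 (k + l) := fun d x =>
  ∑ σ ∈ unshuffles k (k + l),
    koszulSign d σ •
      L (Fin.cons ((∑ i : Fin k, d (σ (Fin.castAdd l i))) + δK)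
          (fun j : Fin l => d (σ (Fin.natAdd k j))))
        (Fin.cons
          (prj 𝒢 ((∑ i : Fin k, d (σ (Fin.castAdd l i))) + δK)
            (K (fun i => d (σ (Fin.castAdd l i))) (fun i => x (σ (Fin.castAdd l i)))))
          (fun j : Fin l => x (σ (Fin.natAdd k j))))

/-- Insertion operator `ι_K L` of a `k`-form of degree `δK` into an `l`-form. -/
def insertionOp [DirectSum.Decomposition 𝒢] {k l : ℕ} (δK : ℤ) (K : GForm 𝒢 k) :
    GForm 𝒢 l → GForm 𝒢 (k + l - 1) :=
  match l with
  | 0 => fun _ => fun _ _ => 0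
  | _ + 1 => fun L => insertPos 𝒢 δK K L

/-- A formal sum of vector valued forms of all arities. -/
abbrev MultiForm : Type _ := (k : ℕ) → GForm 𝒢 k

/-- A single `k`-form seen as a formal sum concentrated in arity `k`. -/
def singleF (k : ℕ) (K : GForm 𝒢 k) : MultiForm 𝒢 :=
  fun n => if h : n = k then castForm h.symm K else 0

/-- The Richardson–Nijenhuis bracket `[K,L] = ι_K L - (-1)^{K̄ L̄} ι_L K` of formal
sums of forms `K` (of degree `δK`) and `L` (of degree `δL`), computed aritywise. -/
def rnBracketM [DirectSum.Decomposition 𝒢] (δK δL : ℤ) (K L : MultiForm 𝒢) : MultiForm 𝒢 :=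
  fun n =>
    (∑ p ∈ (Finset.range (n + 2)).attach,
      castForm (by have := Finset.mem_range.mp p.2; omega)
        (insertionOp 𝒢 δK (K p.1) (L (n + 1 - p.1))))
    - ((-1 : ℤ) ^ (δK * δL).natAbs) •
      (∑ p ∈ (Finset.range (n + 2)).attach,
        castForm (by have := Finset.mem_range.mp p.2; omega)
          (insertionOp 𝒢 δL (L p.1) (K (n + 1 - p.1))))

/-- `K` is a graded symmetric vector valued `k`-form of degree `δ`. -/
structure IsSymFormOfDeg {k : ℕ} (δ : ℤ) (K : GForm 𝒢 k) : Prop where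
  mem_grading : ∀ (d : Fin k → ℤ) (x : (i : Fin k) → 𝒢 (d i)), K d x ∈ 𝒢 ((∑ i, d i) + δ)
  map_add : ∀ (d : Fin k → ℤ) (x : (i : Fin k) → 𝒢 (d i)) (i : Fin k) (a b : 𝒢 (d i)),
    K d (Function.update x i (a + b)) = K d (Function.update x i a) + K d (Function.update x i b)
  map_smul : ∀ (d : Fin k → ℤ) (x : (i : Fin k) → 𝒢 (d i)) (i : Fin k) (c : ℝ) (a : 𝒢 (d i)),
    K d (Function.update x i (c • a)) = c • K d (Function.update x i a)
  symm : ∀ (d : Fin k → ℤ) (σ : Equiv.Perm (Fin k)) (x : (i : Fin k) → 𝒢 (d i)),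
    K (d ∘ σ) (fun i => x (σ i)) = koszulSign d σ • K d x

/-- The `L_∞` identities for a family `(l_i)` of symmetric vector valued forms of degree 1:
for each `n`, `Σ_{i+j=n+1} Σ_{σ ∈ Sh(i,j-1)} ε(σ) l_j (l_i (X_σ(1),…), X_…) = 0`. -/
def LInftyIdentity [DirectSum.Decomposition 𝒢] (l : MultiForm 𝒢) : Prop :=
  ∀ n : ℕ,
    (∑ p ∈ (Finset.range (n + 2)).attach,
      castForm (by have := Finset.mem_range.mp p.2; omega)
        (insertionOp 𝒢 1 (l p.1) (l (n + 1 - p.1)))) = (0 : GForm 𝒢 n)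

end Framework

section Gerstenhaber

variable {V : Type*} [AddCommGroup V] [Module ℝ V]

/-- A Gerstenhaber algebra structure on a graded vector space `(V, 𝒜)`: a graded
commutative associative product `wedge` together with a graded Lie bracket on the
shifted space which is a degree `i` derivation in each argument. -/
structure Gerstenhaber (𝒜 : ℤ → Submodule ℝ V) : Type _ where
  wedge : V →ₗ[ℝ] V →ₗ[ℝ] V
  bracket : V →ₗ[ℝ] V →ₗ[ℝ] V
  wedge_mem : ∀ (i j : ℤ) (x y : V), x ∈ 𝒜 i → y ∈ 𝒜 j → wedge x y ∈ 𝒜 (i + j)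
  bracket_mem : ∀ (i j : ℤ) (x y : V), x ∈ 𝒜 i → y ∈ 𝒜 j → bracket x y ∈ 𝒜 (i + j - 1)
  wedge_assoc : ∀ x y z, wedge (wedge x y) z = wedge x (wedge y z)
  wedge_comm : ∀ (i j : ℤ) (x y : V), x ∈ 𝒜 i → y ∈ 𝒜 j →
    wedge x y = ((-1 : ℤ) ^ (i * j).natAbs) • wedge y x
  bracket_antisymm : ∀ (i j : ℤ) (x y : V), x ∈ 𝒜 i → y ∈ 𝒜 j →
    bracket x y = -(((-1 : ℤ) ^ ((i - 1) * (j - 1)).natAbs) • bracket y x)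
  jacobi : ∀ (i j : ℤ) (x y z : V), x ∈ 𝒜 i → y ∈ 𝒜 j →
    bracket x (bracket y z) = bracket (bracket x y) z
      + ((-1 : ℤ) ^ ((i - 1) * (j - 1)).natAbs) • bracket y (bracket x z)
  leibniz : ∀ (i j : ℤ) (x y z : V), x ∈ 𝒜 i → y ∈ 𝒜 j →
    bracket x (wedge y z) = wedge (bracket x y) z
      + ((-1 : ℤ) ^ ((i - 1) * j).natAbs) • wedge y (bracket x z)

variable {𝒜 : ℤ → Submodule ℝ V}

/-- The grading of the graded vector space `E` with `E_{-k} := A^k`. -/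
abbrev negG (𝒜 : ℤ → Submodule ℝ V) : ℤ → Submodule ℝ V := fun i => 𝒜 (-i)

/-- Iterated wedge product of `k+1` elements. -/
def wedgeAll (G : Gerstenhaber 𝒜) : {k : ℕ} → (Fin (k + 1) → V) → V
  | 0, x => x 0
  | _ + 1, x => G.wedge (x 0) (wedgeAll G (fun i => x i.succ))

/-- The symmetric vector valued `k`-form `𝒩_k (P_1, …, P_k) := P_1 ∧ ⋯ ∧ P_k`. -/
def mathcalN (G : Gerstenhaber 𝒜) (𝒢 : ℤ → Submodule ℝ V) : (k : ℕ) → GForm 𝒢 k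
  | 0 => fun _ _ => 0
  | _ + 1 => fun _ x => wedgeAll G (fun i => (x i : V))

/-- The symmetric vector valued 2-form `l_2 (P_1, P_2) := (-1)^{|P_1|} [P_1, P_2]`. -/
def l2G (G : Gerstenhaber 𝒜) (𝒢 : ℤ → Submodule ℝ V) : GForm 𝒢 2 :=
  fun d x => ((-1 : ℤ) ^ (d 0).natAbs) • G.bracket (x 0) (x 1)

/-- The family `l_1 := 0`, `l_2`, and `l_i := ι_{l_2} 𝒩_{i-1}` for `i > 2`. -/
def lFormsG (G : Gerstenhaber 𝒜) (𝒢 : ℤ → Submodule ℝ V) [DirectSum.Decomposition 𝒢] :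
    (i : ℕ) → GForm 𝒢 i
  | 0 => 0
  | 1 => 0
  | 2 => l2G G 𝒢
  | i + 3 => castForm (by omega) (insertionOp 𝒢 1 (l2G G 𝒢) (mathcalN G 𝒢 (i + 2)))

end Gerstenhaber
section Aux
variable {V : Type*} [AddCommGroup V] [Module ℝ V]

-- cast lemmas
theorem castForm_zero {𝒢 : ℤ → Submodule ℝ V} {m n : ℕ} (h : m = n) :
    castForm h (0 : GForm 𝒢 m) = 0 := by cases h; rfl

theorem castForm_self {𝒢 : ℤ → Submodule ℝ V} {m : ℕ} (h : m = m) (K : GForm 𝒢 m) :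
    castForm h K = K := rfl

theorem castForm_trans {𝒢 : ℤ → Submodule ℝ V} {a b c : ℕ} (h1 : a = b) (h2 : b = c)
    (K : GForm 𝒢 a) : castForm h2 (castForm h1 K) = castForm (h1.trans h2) K := by
  cases h1; cases h2; rfl

theorem castForm_nsmul {𝒢 : ℤ → Submodule ℝ V} {m n : ℕ} (h : m = n) (c : ℕ) (K : GForm 𝒢 m) :
    castForm h (c • K) = c • castForm h K := by cases h; rfl

theorem singleF_eq {𝒢 : ℤ → Submodule ℝ V} {k m : ℕ} (K : GForm 𝒢 k) (h : m = k) :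
    singleF 𝒢 k K m = castForm h.symm K := dif_pos h

theorem singleF_ne {𝒢 : ℤ → Submodule ℝ V} {k m : ℕ} (K : GForm 𝒢 k) (h : m ≠ k) :
    singleF 𝒢 k K m = 0 := dif_neg h

theorem insertionOp_cast_right {𝒢 : ℤ → Submodule ℝ V} [DirectSum.Decomposition 𝒢]
    {k m m' : ℕ} (δ : ℤ) (K : GForm 𝒢 k) (h : m = m') (L : GForm 𝒢 m) :
    insertionOp 𝒢 δ K (castForm h L) = castForm (by rw [h]) (insertionOp 𝒢 δ K L) := by
  cases h; rfl

theorem insertionOp_zero_right {𝒢 : ℤ → Submodule ℝ V} [DirectSum.Decomposition 𝒢]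
    {k l : ℕ} (δ : ℤ) (K : GForm 𝒢 k) :
    insertionOp 𝒢 δ K (0 : GForm 𝒢 l) = 0 := by
  cases l with
  | zero => rfl
  | succ l =>
    funext d x
    show ∑ σ ∈ unshuffles k (k + l), koszulSign d σ • (0 : V) = 0
    simp

-- koszulSign basics
theorem koszulSign_one {n : ℕ} (d : Fin n → ℤ) : koszulSign d 1 = 1 := by
  apply Finset.prod_eq_one
  intro p hp
  rw [Finset.mem_filter] at hp
  simp only [Finset.mem_filter, Equiv.Perm.one_apply] at hp
  exact absurd hp.2.2 (lt_asymm hp.2.1)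

theorem koszulSign_mul_self {n : ℕ} (d : Fin n → ℤ) (σ : Equiv.Perm (Fin n)) :
    koszulSign d σ * koszulSign d σ = 1 := by
  rw [koszulSign, ← Finset.prod_mul_distrib]
  apply Finset.prod_eq_one
  intro p _
  rw [← pow_add]
  exact Even.neg_one_pow ⟨_, rfl⟩

end Aux
section Wedge
variable {V : Type*} [AddCommGroup V] [Module ℝ V] {𝒜 : ℤ → Submodule ℝ V}

/-- Total iterated wedge product. -/
def wedgeN (G : Gerstenhaber 𝒜) : (n : ℕ) → (Fin n → V) → V
  | 0, _ => 0
  | 1, x => x 0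
  | n + 2, x => G.wedge (x 0) (wedgeN G (n + 1) (x ∘ Fin.succ))

theorem wedgeN_head (G : Gerstenhaber 𝒜) {n : ℕ} (hn : n ≠ 0) (x : Fin (n + 1) → V) :
    wedgeN G (n + 1) x = G.wedge (x 0) (wedgeN G n (x ∘ Fin.succ)) := by
  cases n with
  | zero => exact absurd rfl hn
  | succ n => rfl

theorem wedgeAll_eq_wedgeN (G : Gerstenhaber 𝒜) {k : ℕ} (x : Fin (k + 1) → V) :
    wedgeAll G x = wedgeN G (k + 1) x := by
  induction k with
  | zero => rfl
  | succ k ih => rw [wedgeAll, ih]; rfl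

theorem mathcalN_apply_wedgeN (G : Gerstenhaber 𝒜) (𝒢 : ℤ → Submodule ℝ V) (n : ℕ)
    (d : Fin n → ℤ) (x : (i : Fin n) → 𝒢 (d i)) :
    mathcalN G 𝒢 n d x = wedgeN G n (fun i => (x i : V)) := by
  cases n with
  | zero => rfl
  | succ n => exact wedgeAll_eq_wedgeN G _

theorem wedgeN_cast (G : Gerstenhaber 𝒜) {m n : ℕ} (h : m = n) (x : Fin n → V) :
    wedgeN G m (x ∘ Fin.cast h) = wedgeN G n x := by cases h; rfl

theorem wedgeN_congr (G : Gerstenhaber 𝒜) {n : ℕ} {x y : Fin n → V} (h : ∀ i, x i = y i) :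
    wedgeN G n x = wedgeN G n y := by rw [funext h]

theorem wedgeN_mem (G : Gerstenhaber 𝒜) : ∀ (n : ℕ) (d : Fin n → ℤ) (x : Fin n → V),
    (∀ i, x i ∈ 𝒜 (d i)) → wedgeN G n x ∈ 𝒜 (∑ i, d i)
  | 0, d, x, hx => by simpa [wedgeN] using zero_mem _
  | 1, d, x, hx => by simpa [wedgeN] using hx 0
  | (n + 2), d, x, hx => by
    rw [Fin.sum_univ_succ, wedgeN]
    exact G.wedge_mem _ _ _ _ (hx 0) (wedgeN_mem G (n + 1) (d ∘ Fin.succ) (x ∘ Fin.succ)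
      (fun i => hx i.succ))

theorem wedgeN_zero_head (G : Gerstenhaber 𝒜) (l : ℕ) (r : Fin l → V) :
    wedgeN G (l + 1) (Fin.cons 0 r) = 0 := by
  cases l with
  | zero => rfl
  | succ l => rw [wedgeN]; simp

end Wedge
section Split
variable {V : Type*} [AddCommGroup V] [Module ℝ V] {𝒜 : ℤ → Submodule ℝ V}

theorem wedgeN_split (G : Gerstenhaber 𝒜) :
    ∀ (k l : ℕ) (x : Fin (k + 1 + (l + 1)) → V),
    wedgeN G (k + 1 + (l + 1)) x =
      G.wedge (wedgeN G (k + 1) (x ∘ Fin.castAdd (l + 1)))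
        (wedgeN G (l + 1) (x ∘ Fin.natAdd (k + 1))) := by
  intro k
  induction k with
  | zero =>
    intro l x
    show wedgeN G (1 + l + 1) x = _
    rw [wedgeN_head G (n := 1 + l) (by omega)]
    have h : 1 + l = l + 1 := by omega
    have hx : x ∘ Fin.succ = (x ∘ Fin.natAdd 1) ∘ Fin.cast h := by
      funext i
      simp only [Function.comp_apply]
      congr 1
      apply Fin.ext
      simp only [Fin.val_succ, Fin.coe_natAdd, Fin.coe_cast]
      omega
    rw [hx, wedgeN_cast]
    show _ = G.wedge ((x ∘ Fin.castAdd (l+1)) ⟨0, by omega⟩) _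
    congr 2 <;> (apply Fin.ext <;> simp)
  | succ k ih =>
    intro l x
    have h2 : k + 1 + (l + 1) = k + 2 + l := by omega
    set y : Fin (k + 1 + (l + 1)) → V := (x ∘ Fin.succ) ∘ Fin.cast h2 with hy
    have step1 : wedgeN G (k + 1 + 1 + (l + 1)) x
        = G.wedge (x ⟨0, by omega⟩) (wedgeN G (k + 1 + (l + 1)) y) := by
      show wedgeN G (k + 2 + l + 1) x = _
      rw [wedgeN_head G (n := k + 2 + l) (by omega), hy, wedgeN_cast]
      congr 1
    rw [step1, ih l y]
    have hrhs1 : wedgeN G (k + 1 + 1) (x ∘ Fin.castAdd (l + 1))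
        = G.wedge (x ⟨0, by omega⟩)
            (wedgeN G (k + 1) ((x ∘ Fin.castAdd (l + 1)) ∘ Fin.succ)) := by
      rw [wedgeN_head G (n := k + 1) (by omega) (x ∘ Fin.castAdd (l + 1))]
      congr 2 <;> (apply Fin.ext <;> simp)
    rw [hrhs1, ← G.wedge_assoc]
    congr 2 <;>
      (funext i; simp only [hy, Function.comp_apply]; congr 1; apply Fin.ext;
       simp only [Fin.coe_castAdd, Fin.coe_natAdd, Fin.coe_cast, Fin.val_succ]; try omega)

end Split
section Signs

/-- Comparison under an adjacent swap. -/
theorem swap_adj_lt {n : ℕ} {u v : Fin n} (huv : (u : ℕ) + 1 = (v : ℕ)) {a b : Fin n}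
    (hab : ¬(a = u ∧ b = v)) (hba : ¬(a = v ∧ b = u)) :
    Equiv.swap u v a < Equiv.swap u v b ↔ a < b := by
  simp only [Equiv.swap_apply_def]
  split_ifs <;> simp only [Fin.lt_def, Fin.ext_iff] at * <;> omega

/-- The filter set defining the Koszul sign. -/
def invSet {n : ℕ} (σ : Equiv.Perm (Fin n)) : Finset (Fin n × Fin n) :=
  Finset.univ.filter (fun p : Fin n × Fin n => p.1 < p.2 ∧ σ p.2 < σ p.1)

theorem koszulSign_eq_prod_invSet {n : ℕ} (d : Fin n → ℤ) (σ : Equiv.Perm (Fin n)) :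
    koszulSign d σ = ∏ p ∈ invSet σ, (-1 : ℤ) ^ (d (σ p.1) * d (σ p.2)).natAbs := rfl

theorem swap_mem_facts {n : ℕ} (σ : Equiv.Perm (Fin n)) {u v : Fin n}
    (huv : (u : ℕ) + 1 = (v : ℕ)) (hd : σ v < σ u) :
    ∀ p ∈ invSet (σ * Equiv.swap u v),
      (Equiv.swap u v p.1, Equiv.swap u v p.2) ∈ (invSet σ).erase (u, v) := by
  intro p hp
  have huvlt : u < v := Fin.lt_def.mpr (by omega)
  rw [invSet, Finset.mem_filter] at hp
  simp only [invSet, Finset.mem_filter, Finset.mem_univ, true_and,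
    Equiv.Perm.mul_apply] at hp
  have hpuv : ¬(p.1 = u ∧ p.2 = v) := by
    rintro ⟨h1, h2⟩
    rw [h1, h2] at hp
    rw [Equiv.swap_apply_left, Equiv.swap_apply_right] at hp
    exact absurd hp.2 (lt_asymm hd)
  have hpvu : ¬(p.1 = v ∧ p.2 = u) := by
    rintro ⟨h1, h2⟩
    rw [h1, h2] at hp
    exact absurd hp.1 (lt_asymm huvlt)
  rw [Finset.mem_erase]
  constructor
  · intro h
    have h1 : Equiv.swap u v p.1 = u := congrArg Prod.fst h
    have h2 : Equiv.swap u v p.2 = v := congrArg Prod.snd h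
    have h1' : p.1 = v := by
      have := congrArg (Equiv.swap u v) h1
      rwa [Equiv.swap_apply_self, Equiv.swap_apply_left] at this
    have h2' : p.2 = u := by
      have := congrArg (Equiv.swap u v) h2
      rwa [Equiv.swap_apply_self, Equiv.swap_apply_right] at this
    exact hpvu ⟨h1', h2'⟩
  · simp only [invSet, Finset.mem_filter, Finset.mem_univ, true_and]
    exact ⟨(swap_adj_lt huv hpuv hpvu).mpr hp.1, hp.2⟩

theorem swap_mem_facts' {n : ℕ} (σ : Equiv.Perm (Fin n)) {u v : Fin n}
    (huv : (u : ℕ) + 1 = (v : ℕ)) :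
    ∀ q ∈ (invSet σ).erase (u, v),
      (Equiv.swap u v q.1, Equiv.swap u v q.2) ∈ invSet (σ * Equiv.swap u v) := by
  intro q hq
  have huvlt : u < v := Fin.lt_def.mpr (by omega)
  rw [Finset.mem_erase] at hq
  obtain ⟨hqne, hq⟩ := hq
  simp only [invSet, Finset.mem_filter, Finset.mem_univ, true_and] at hq ⊢
  have hquv : ¬(q.1 = u ∧ q.2 = v) := by
    rintro ⟨h1, h2⟩; exact hqne (Prod.ext h1 h2)
  have hqvu : ¬(q.1 = v ∧ q.2 = u) := by
    rintro ⟨h1, h2⟩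
    rw [h1, h2] at hq
    exact absurd hq.1 (lt_asymm huvlt)
  refine ⟨(swap_adj_lt huv hquv hqvu).mpr hq.1, ?_⟩
  simp only [Equiv.Perm.mul_apply, Equiv.swap_apply_self]
  exact hq.2

/-- Koszul sign under composition with an adjacent descent transposition. -/
theorem koszulSign_descent {n : ℕ} (d : Fin n → ℤ) (σ : Equiv.Perm (Fin n)) {u v : Fin n}
    (huv : (u : ℕ) + 1 = (v : ℕ)) (hd : σ v < σ u) :
    koszulSign d σ
      = (-1 : ℤ) ^ (d (σ u) * d (σ v)).natAbs * koszulSign d (σ * Equiv.swap u v) := by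
  have huvlt : u < v := Fin.lt_def.mpr (by omega)
  have huvmem : (u, v) ∈ invSet σ := by
    simp only [invSet, Finset.mem_filter, Finset.mem_univ, true_and]
    exact ⟨huvlt, hd⟩
  rw [koszulSign_eq_prod_invSet, koszulSign_eq_prod_invSet,
    ← Finset.mul_prod_erase _ _ huvmem]
  congr 1
  refine Finset.prod_nbij' (fun q => (Equiv.swap u v q.1, Equiv.swap u v q.2))
    (fun p => (Equiv.swap u v p.1, Equiv.swap u v p.2))
    (swap_mem_facts' σ huv) (swap_mem_facts σ huv hd) ?_ ?_ ?_
  · intro q _; simp [Equiv.swap_apply_self]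
  · intro p _; simp [Equiv.swap_apply_self]
  · intro q _
    simp only [Equiv.Perm.mul_apply, Equiv.swap_apply_self]

/-- The inversion number decreases along a descent. -/
theorem invSet_card_descent {n : ℕ} (σ : Equiv.Perm (Fin n)) {u v : Fin n}
    (huv : (u : ℕ) + 1 = (v : ℕ)) (hd : σ v < σ u) :
    (invSet (σ * Equiv.swap u v)).card + 1 = (invSet σ).card := by
  have huvlt : u < v := Fin.lt_def.mpr (by omega)
  have huvmem : (u, v) ∈ invSet σ := by
    simp only [invSet, Finset.mem_filter, Finset.mem_univ, true_and]
    exact ⟨huvlt, hd⟩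
  have hcard : (invSet (σ * Equiv.swap u v)).card = ((invSet σ).erase (u, v)).card :=
    Finset.card_nbij' (fun q => (Equiv.swap u v q.1, Equiv.swap u v q.2))
      (fun p => (Equiv.swap u v p.1, Equiv.swap u v p.2))
      (swap_mem_facts σ huv hd) (swap_mem_facts' σ huv)
      (by intro p _; simp [Equiv.swap_apply_self])
      (by intro q _; simp [Equiv.swap_apply_self])
  have hpos : 0 < (invSet σ).card := Finset.card_pos.mpr ⟨_, huvmem⟩
  rw [hcard, Finset.card_erase_of_mem huvmem]
  omega

/-- Any non-identity permutation has an adjacent descent. -/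
theorem exists_descent {n : ℕ} (σ : Equiv.Perm (Fin n)) (hσ : σ ≠ 1) :
    ∃ (m : ℕ) (h : m + 1 < n), σ ⟨m + 1, h⟩ < σ ⟨m, by omega⟩ := by
  by_contra hc
  push_neg at hc
  have hmono : ∀ (m : ℕ) (h : m + 1 < n), σ ⟨m, by omega⟩ < σ ⟨m + 1, h⟩ := by
    intro m h
    rcases lt_or_eq_of_le (hc m h) with h' | h'
    · exact h'
    · exact absurd (σ.injective h') (by simp [Fin.ext_iff])
  have hsm : StrictMono σ := by
    have key : ∀ (t : ℕ) (a b : Fin n), (b : ℕ) = (a : ℕ) + (t + 1) → σ a < σ b := by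
      intro t
      induction t with
      | zero =>
        intro a b hab
        have hbn := b.isLt
        have hthis := hmono (a : ℕ) (by omega)
        have hb : b = ⟨(a : ℕ) + 1, by omega⟩ := Fin.ext hab
        rw [hb]
        exact hthis
      | succ p ih =>
        intro a b hab
        have hbn := b.isLt
        have hlt : ((a : ℕ) + (p + 1)) < n := by omega
        have h1 : σ a < σ ⟨(a : ℕ) + (p + 1), hlt⟩ := ih a _ (by simp)
        have h2 : σ ⟨(a : ℕ) + (p + 1), hlt⟩ < σ b := by
          have hthis := hmono ((a : ℕ) + (p + 1)) (by omega)
          have hb : b = ⟨(a : ℕ) + (p + 1) + 1, by omega⟩ := Fin.ext (show (b : ℕ) = (a : ℕ) + (p + 1) + 1 by omega)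
          rw [hb]
          exact hthis
        exact h1.trans h2
    intro a b hab
    exact key ((b : ℕ) - (a : ℕ) - 1) a b (by rw [Fin.lt_def] at hab; omega)
  have hle : ∀ (f : Fin n → Fin n), StrictMono f → ∀ i : Fin n, (i : ℕ) ≤ (f i : ℕ) := by
    intro f hf
    have key : ∀ (m : ℕ) (hm : m < n), m ≤ (f ⟨m, hm⟩ : ℕ) := by
      intro m
      induction m with
      | zero => omega
      | succ p ih =>
        intro hm
        have h1 : f ⟨p, by omega⟩ < f ⟨p + 1, hm⟩ := hf (by rw [Fin.lt_def]; simp)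
        have h2 := ih (by omega)
        rw [Fin.lt_def] at h1
        omega
    intro i
    simpa using key (i : ℕ) i.2
  have hsm' : StrictMono (σ⁻¹ : Equiv.Perm (Fin n)) := by
    intro a b hab
    rcases lt_trichotomy ((σ⁻¹ : Equiv.Perm (Fin n)) a) ((σ⁻¹ : Equiv.Perm (Fin n)) b)
      with h | h | h
    · exact h
    · have : a = b := by
        rw [← σ.apply_symm_apply a, ← σ.apply_symm_apply b]
        exact congrArg σ h
      exact absurd this (ne_of_lt hab)
    · have h2 := hsm h
      simp only [Equiv.Perm.inv_def, Equiv.apply_symm_apply] at h2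
      exact absurd hab (lt_asymm h2)
  exact hσ (by
    ext i
    have h1 := hle σ hsm i
    have h2 := hle (σ⁻¹ : Equiv.Perm (Fin n)) hsm' (σ i)
    simp only [Equiv.Perm.inv_def, Equiv.symm_apply_apply] at h2
    simp only [Equiv.Perm.one_apply]
    omega)

end Signs
section Perm
variable {V : Type*} [AddCommGroup V] [Module ℝ V] {𝒜 : ℤ → Submodule ℝ V}

theorem wedgeN_swap (G : Gerstenhaber 𝒜) :
    ∀ (m n : ℕ) (u v : Fin n) (hu : (u : ℕ) = m) (hv : (v : ℕ) = m + 1)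
      (x : Fin n → V) (a b : ℤ), x u ∈ 𝒜 a → x v ∈ 𝒜 b →
      wedgeN G n (x ∘ Equiv.swap u v) = ((-1 : ℤ) ^ (a * b).natAbs) • wedgeN G n x := by
  intro m
  induction m with
  | zero =>
    intro n u v hu hv x a b ha hb
    match n, u, v, x with
    | (t + 2), u, v, x =>
    have h0u : (0 : Fin (t + 2)) = u := Fin.ext (by simp [hu])
    have h1v : (Fin.succ 0 : Fin (t + 2)) = v := Fin.ext (by simp [hv])
    match t with
    | 0 =>
      show G.wedge ((x ∘ Equiv.swap u v) 0) ((x ∘ Equiv.swap u v) (Fin.succ 0))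
        = _ • G.wedge (x 0) (x (Fin.succ 0))
      simp only [Function.comp_apply, h0u, h1v, Equiv.swap_apply_left, Equiv.swap_apply_right]
      rw [G.wedge_comm b a _ _ hb ha]
      congr 2
      rw [Int.mul_comm]
    | (t' + 1) =>
      show G.wedge ((x ∘ Equiv.swap u v) 0)
          (G.wedge ((x ∘ Equiv.swap u v) (Fin.succ 0))
            (wedgeN G (t' + 1) ((x ∘ Equiv.swap u v) ∘ Fin.succ ∘ Fin.succ)))
        = _ • G.wedge (x 0) (G.wedge (x (Fin.succ 0)) (wedgeN G (t' + 1) (x ∘ Fin.succ ∘ Fin.succ)))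
      have htail : (x ∘ Equiv.swap u v) ∘ Fin.succ ∘ Fin.succ = x ∘ Fin.succ ∘ Fin.succ := by
        funext i
        simp only [Function.comp_apply]
        congr 1
        apply Equiv.swap_apply_of_ne_of_ne
        · rw [Fin.ne_iff_vne]; simp only [Fin.val_succ, hu]; omega
        · rw [Fin.ne_iff_vne]; simp only [Fin.val_succ, hv]; omega
      rw [htail]
      simp only [Function.comp_apply, h0u, h1v, Equiv.swap_apply_left, Equiv.swap_apply_right]
      rw [← G.wedge_assoc, ← G.wedge_assoc, G.wedge_comm b a _ _ hb ha]
      rw [map_zsmul, LinearMap.smul_apply]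
      congr 2
      rw [Int.mul_comm]
  | succ m ih =>
    intro n u v hu hv x a b ha hb
    match n, u, v, x with
    | (t + 2), u, v, x =>
    have hvt := v.isLt
    have u' : Fin (t + 1) := ⟨m, by omega⟩
    clear u'
    set u' : Fin (t + 1) := ⟨m, by omega⟩ with hu'def
    set v' : Fin (t + 1) := ⟨m + 1, by omega⟩ with hv'def
    have hsuccu : Fin.succ u' = u := Fin.ext (by simp [hu'def, hu])
    have hsuccv : Fin.succ v' = v := Fin.ext (by simp [hv'def, hv])
    show G.wedge ((x ∘ Equiv.swap u v) 0)
        (wedgeN G (t + 1) ((x ∘ Equiv.swap u v) ∘ Fin.succ))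
      = _ • G.wedge (x 0) (wedgeN G (t + 1) (x ∘ Fin.succ))
    have h00 : (x ∘ Equiv.swap u v) 0 = x 0 := by
      simp only [Function.comp_apply]
      congr 1
      apply Equiv.swap_apply_of_ne_of_ne
      · rw [Fin.ne_iff_vne]; simp only [Fin.val_zero, hu]; omega
      · rw [Fin.ne_iff_vne]; simp only [Fin.val_zero, hv]; omega
    have htail : (x ∘ Equiv.swap u v) ∘ Fin.succ = (x ∘ Fin.succ) ∘ Equiv.swap u' v' := by
      funext i
      simp only [Function.comp_apply]
      rcases eq_or_ne i u' with h | hiu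
      · subst h
        rw [Equiv.swap_apply_left, hsuccu, hsuccv, Equiv.swap_apply_left]
      rcases eq_or_ne i v' with h | hiv
      · subst h
        rw [Equiv.swap_apply_right, hsuccv, hsuccu, Equiv.swap_apply_right]
      · rw [Equiv.swap_apply_of_ne_of_ne hiu hiv]
        congr 1
        apply Equiv.swap_apply_of_ne_of_ne
        · rw [← hsuccu]; exact fun hh => hiu (Fin.succ_injective _ hh)
        · rw [← hsuccv]; exact fun hh => hiv (Fin.succ_injective _ hh)
    rw [h00, htail, ih (t + 1) u' v' rfl rfl (x ∘ Fin.succ) a b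
      (by simpa [hsuccu] using ha) (by simpa [hsuccv] using hb)]
    rw [map_zsmul]

theorem wedgeN_perm_aux (G : Gerstenhaber 𝒜) :
    ∀ (N n : ℕ) (d : Fin n → ℤ) (σ : Equiv.Perm (Fin n)) (x : Fin n → V),
      (invSet σ).card ≤ N → (∀ i, x i ∈ 𝒜 (-(d i))) →
      wedgeN G n (fun i => x (σ i)) = koszulSign d σ • wedgeN G n x := by
  intro N
  induction N with
  | zero =>
    intro n d σ x hcard hx
    rcases eq_or_ne σ 1 with h | h
    · subst h
      simp [koszulSign_one, Equiv.Perm.one_apply]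
    · obtain ⟨m, hm, hd⟩ := exists_descent σ h
      have hmem : (⟨m, by omega⟩, (⟨m + 1, hm⟩ : Fin n)) ∈ invSet σ := by
        simp only [invSet, Finset.mem_filter, Finset.mem_univ, true_and]
        exact ⟨Fin.lt_def.mpr (by simp), hd⟩
      have := Finset.card_pos.mpr ⟨_, hmem⟩
      omega
  | succ N ihN =>
    intro n d σ x hcard hx
    rcases eq_or_ne σ 1 with h | h
    · subst h
      simp [koszulSign_one, Equiv.Perm.one_apply]
    · obtain ⟨m, hm, hd⟩ := exists_descent σ h
      set u : Fin n := ⟨m, by omega⟩ with hudef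
      set v : Fin n := ⟨m + 1, hm⟩ with hvdef
      have huv : (u : ℕ) + 1 = (v : ℕ) := by simp [hudef, hvdef]
      have hd' : σ v < σ u := hd
      set τ : Equiv.Perm (Fin n) := σ * Equiv.swap u v with hτdef
      have hcardτ : (invSet τ).card ≤ N := by
        have h2 := invSet_card_descent σ huv hd'
        rw [← hτdef] at h2
        omega
      have hxστ : (fun i => x (σ i)) = (fun i => x (τ i)) ∘ Equiv.swap u v := by
        funext i
        simp [hτdef, Equiv.Perm.mul_apply, Equiv.swap_apply_self]
      rw [hxστ]
      have hτu : τ u = σ v := by simp [hτdef, Equiv.Perm.mul_apply]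
      have hτv : τ v = σ u := by simp [hτdef, Equiv.Perm.mul_apply]
      rw [wedgeN_swap G m n u v (by simp [hudef]) (by simp [hvdef])
        (fun i => x (τ i)) (-(d (σ v))) (-(d (σ u)))
        (by show x (τ u) ∈ _; rw [hτu]; exact hx (σ v)) (by show x (τ v) ∈ _; rw [hτv]; exact hx (σ u))]
      rw [ihN n d τ x hcardτ hx, smul_smul]
      rw [koszulSign_descent d σ huv hd']
      congr 2
      simp only [Int.natAbs_mul, Int.natAbs_neg]
      rw [Nat.mul_comm]

theorem wedgeN_perm (G : Gerstenhaber 𝒜) {n : ℕ} (d : Fin n → ℤ) (σ : Equiv.Perm (Fin n))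
    (x : Fin n → V) (hx : ∀ i, x i ∈ 𝒜 (-(d i))) :
    wedgeN G n (fun i => x (σ i)) = koszulSign d σ • wedgeN G n x :=
  wedgeN_perm_aux G _ n d σ x le_rfl hx

end Perm
section CardUnshuffles

theorem unshuffles_castAdd_strictMono {k l : ℕ} {σ : Equiv.Perm (Fin (k + l))}
    (hσ : σ ∈ unshuffles k (k + l)) : StrictMono (fun i : Fin k => σ (Fin.castAdd l i)) := by
  rw [unshuffles, Finset.mem_filter] at hσ
  intro i j hij
  rw [Fin.lt_def] at hij
  exact hσ.2.1 (Fin.castAdd l i) (Fin.castAdd l j)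
    (by rw [Fin.lt_def]; simpa using hij) (by simpa using j.isLt)

theorem unshuffles_natAdd_strictMono {k l : ℕ} {σ : Equiv.Perm (Fin (k + l))}
    (hσ : σ ∈ unshuffles k (k + l)) : StrictMono (fun j : Fin l => σ (Fin.natAdd k j)) := by
  rw [unshuffles, Finset.mem_filter] at hσ
  intro i j hij
  rw [Fin.lt_def] at hij
  exact hσ.2.2 (Fin.natAdd k i) (Fin.natAdd k j)
    (by rw [Fin.lt_def]; simpa using hij) (by simp)

/-- The unshuffle associated with a subset. -/
def unshufOf {k l : ℕ} (s : Finset (Fin (k + l))) (hm : s.card = k) (hn : sᶜ.card = l) :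
    Equiv.Perm (Fin (k + l)) :=
  finSumFinEquiv.symm.trans (finSumEquivOfFinset hm hn)

theorem unshufOf_castAdd {k l : ℕ} (s : Finset (Fin (k + l))) (hm : s.card = k)
    (hn : sᶜ.card = l) (i : Fin k) :
    unshufOf s hm hn (Fin.castAdd l i) = s.orderEmbOfFin hm i := by
  rw [unshufOf, Equiv.trans_apply, finSumFinEquiv_symm_apply_castAdd]
  exact finSumEquivOfFinset_inl hm hn i

theorem unshufOf_natAdd {k l : ℕ} (s : Finset (Fin (k + l))) (hm : s.card = k)
    (hn : sᶜ.card = l) (j : Fin l) :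
    unshufOf s hm hn (Fin.natAdd k j) = sᶜ.orderEmbOfFin hn j := by
  rw [unshufOf, Equiv.trans_apply, finSumFinEquiv_symm_apply_natAdd]
  exact finSumEquivOfFinset_inr hm hn j

theorem unshufOf_apply_lt {k l : ℕ} (s : Finset (Fin (k + l))) (hm : s.card = k)
    (hn : sᶜ.card = l) (c : Fin (k + l)) (hck : (c : ℕ) < k) :
    unshufOf s hm hn c = s.orderEmbOfFin hm ⟨(c : ℕ), hck⟩ := by
  conv_lhs => rw [show c = Fin.castAdd l ⟨(c : ℕ), hck⟩ from Fin.ext rfl]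
  exact unshufOf_castAdd s hm hn _

theorem unshufOf_apply_ge {k l : ℕ} (s : Finset (Fin (k + l))) (hm : s.card = k)
    (hn : sᶜ.card = l) (c : Fin (k + l)) (hck : k ≤ (c : ℕ)) :
    unshufOf s hm hn c = sᶜ.orderEmbOfFin hn ⟨(c : ℕ) - k, by have := c.isLt; omega⟩ := by
  conv_lhs => rw [show c = Fin.natAdd k ⟨(c : ℕ) - k, by have := c.isLt; omega⟩ from
    Fin.ext (show (c : ℕ) = k + ((c : ℕ) - k) by omega)]
  exact unshufOf_natAdd s hm hn _

theorem unshufOf_mem_unshuffles {k l : ℕ} (s : Finset (Fin (k + l))) (hm : s.card = k)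
    (hn : sᶜ.card = l) : unshufOf s hm hn ∈ unshuffles k (k + l) := by
  rw [unshuffles, Finset.mem_filter]
  refine ⟨Finset.mem_univ _, ?_, ?_⟩
  · intro a b hab hbk
    rw [Fin.lt_def] at hab
    rw [unshufOf_apply_lt s hm hn a (by omega), unshufOf_apply_lt s hm hn b hbk]
    exact (s.orderEmbOfFin hm).strictMono (by rw [Fin.lt_def]; exact hab)
  · intro a b hab hka
    rw [Fin.lt_def] at hab
    have hbk : k ≤ (b : ℕ) := by omega
    rw [unshufOf_apply_ge s hm hn a hka, unshufOf_apply_ge s hm hn b hbk]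
    refine (sᶜ.orderEmbOfFin hn).strictMono ?_
    rw [Fin.lt_def]
    simp only [Fin.val_mk]
    omega

theorem card_unshuffles (k l : ℕ) : (unshuffles k (k + l)).card = (k + l).choose k := by
  classical
  have hcard : (Finset.powersetCard k (Finset.univ : Finset (Fin (k + l)))).card
      = (k + l).choose k := by
    rw [Finset.card_powersetCard, Finset.card_univ, Fintype.card_fin]
  rw [← hcard]
  have hsc : ∀ s ∈ Finset.powersetCard k (Finset.univ : Finset (Fin (k + l))), s.card = k :=
    fun s hs => (Finset.mem_powersetCard.mp hs).2
  have hscc : ∀ s ∈ Finset.powersetCard k (Finset.univ : Finset (Fin (k + l))),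
      sᶜ.card = l := by
    intro s hs
    rw [Finset.card_compl, Fintype.card_fin, hsc s hs]
    omega
  have himg : ∀ σ ∈ unshuffles k (k + l),
      (Finset.image (fun i : Fin k => σ (Fin.castAdd l i)) Finset.univ)
        ∈ Finset.powersetCard k (Finset.univ : Finset (Fin (k + l))) := by
    intro σ hσ
    rw [Finset.mem_powersetCard]
    refine ⟨Finset.subset_univ _, ?_⟩
    rw [Finset.card_image_of_injective _ (unshuffles_castAdd_strictMono hσ).injective,
      Finset.card_univ, Fintype.card_fin]
  refine Finset.card_bij'
    (fun σ _ => Finset.image (fun i : Fin k => σ (Fin.castAdd l i)) Finset.univ)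
    (fun s hs => unshufOf s (hsc s hs) (hscc s hs)) himg
    (fun s hs => unshufOf_mem_unshuffles s (hsc s hs) (hscc s hs)) ?_ ?_
  · -- left inverse
    intro σ hσ
    set s := Finset.image (fun i : Fin k => σ (Fin.castAdd l i)) Finset.univ with hsdef
    have hsmem := himg σ hσ
    show unshufOf s (hsc s hsmem) (hscc s hsmem) = σ
    have hfwd : ∀ i : Fin k, σ (Fin.castAdd l i) = s.orderEmbOfFin (hsc s hsmem) i := by
      have := Finset.orderEmbOfFin_unique (hsc s hsmem)
        (f := fun i : Fin k => σ (Fin.castAdd l i))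
        (fun x => Finset.mem_image_of_mem _ (Finset.mem_univ x))
        (unshuffles_castAdd_strictMono hσ)
      exact fun i => congrFun this i
    have hbwd : ∀ j : Fin l, σ (Fin.natAdd k j) = sᶜ.orderEmbOfFin (hscc s hsmem) j := by
      have hmem : ∀ j : Fin l, σ (Fin.natAdd k j) ∈ sᶜ := by
        intro j
        rw [Finset.mem_compl, hsdef]
        intro hmem2
        obtain ⟨p, _, hp⟩ := Finset.mem_image.mp hmem2
        have h3 := σ.injective hp
        have hp2 := p.isLt
        have h4 : (Fin.castAdd l p : ℕ) = (Fin.natAdd k j : ℕ) := by rw [h3]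
        simp only [Fin.coe_castAdd, Fin.coe_natAdd] at h4
        omega
      have := Finset.orderEmbOfFin_unique (hscc s hsmem)
        (f := fun j : Fin l => σ (Fin.natAdd k j)) hmem
        (unshuffles_natAdd_strictMono hσ)
      exact fun j => congrFun this j
    apply Equiv.ext
    intro i
    have hbn := i.isLt
    rcases lt_or_ge (i : ℕ) k with hik | hik
    · rw [unshufOf_apply_lt _ _ _ i hik]
      have := hfwd ⟨(i : ℕ), hik⟩
      rw [show Fin.castAdd l ⟨(i : ℕ), hik⟩ = i from Fin.ext rfl] at this
      exact this.symm
    · rw [unshufOf_apply_ge _ _ _ i hik]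
      have := hbwd ⟨(i : ℕ) - k, by omega⟩
      rw [show Fin.natAdd k ⟨(i : ℕ) - k, by omega⟩ = i from
        Fin.ext (show k + ((i : ℕ) - k) = (i : ℕ) by omega)] at this
      exact this.symm
  · -- right inverse
    intro s hs
    show Finset.image (fun i : Fin k => unshufOf s (hsc s hs) (hscc s hs) (Fin.castAdd l i))
      Finset.univ = s
    ext a
    simp only [Finset.mem_image, Finset.mem_univ, true_and]
    constructor
    · rintro ⟨i, rfl⟩
      rw [unshufOf_castAdd]
      exact Finset.orderEmbOfFin_mem s (hsc s hs) i
    · intro ha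
      have hrange := Finset.range_orderEmbOfFin s (hsc s hs)
      have h5 : a ∈ Set.range (s.orderEmbOfFin (hsc s hs)) := by rw [hrange]; exact ha
      obtain ⟨i, hi⟩ := h5
      exact ⟨i, by rw [unshufOf_castAdd]; exact hi⟩

end CardUnshuffles
section InsertNN
variable {V : Type*} [AddCommGroup V] [Module ℝ V] {𝒜 : ℤ → Submodule ℝ V}

theorem coe_cons_fun (𝒢 : ℤ → Submodule ℝ V) {l : ℕ} (dg : Fin (l + 1) → ℤ)
    (P : 𝒢 (dg 0)) (R : (j : Fin l) → 𝒢 (dg j.succ)) :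
    (fun i : Fin (l + 1) => ((Fin.cons (α := fun i => 𝒢 (dg i)) P R i : 𝒢 (dg i)) : V))
      = Fin.cons ((P : V)) (fun j => ((R j : V))) := by
  funext i
  refine Fin.cases ?_ ?_ i <;> simp

theorem wedgeN_cons2 (G : Gerstenhaber 𝒜) {n : ℕ} (a : V) (r : Fin (n + 1) → V) :
    wedgeN G (n + 2) (Fin.cons a r) = G.wedge a (wedgeN G (n + 1) r) := by
  have h1 : Fin.cons a r ∘ Fin.succ = r := by funext i; simp [Fin.cons_succ]
  rw [wedgeN, h1, Fin.cons_zero]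

theorem insertionOp_succ (𝒢 : ℤ → Submodule ℝ V) [DirectSum.Decomposition 𝒢] {k l : ℕ}
    (δ : ℤ) (K : GForm 𝒢 k) (L : GForm 𝒢 (l + 1)) :
    insertionOp 𝒢 δ K L = insertPos 𝒢 δ K L := rfl

theorem insert_NN (G : Gerstenhaber 𝒜) [DirectSum.Decomposition (negG 𝒜)] (k l : ℕ) :
    insertionOp (negG 𝒜) 0 (mathcalN G (negG 𝒜) (k + 1)) (mathcalN G (negG 𝒜) (l + 1))
      = ((k + 1 + l).choose (k + 1)) • mathcalN G (negG 𝒜) (k + 1 + l) := by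
  funext d x
  rw [insertionOp_succ]
  unfold insertPos
  have key : ∀ σ ∈ unshuffles (k + 1) (k + 1 + l),
      koszulSign d σ •
        (mathcalN G (negG 𝒜) (l + 1))
          (Fin.cons ((∑ i : Fin (k + 1), d (σ (Fin.castAdd l i))) + 0)
            (fun j : Fin l => d (σ (Fin.natAdd (k + 1) j))))
          (Fin.cons
            (prj (negG 𝒜) ((∑ i : Fin (k + 1), d (σ (Fin.castAdd l i))) + 0)
              ((mathcalN G (negG 𝒜) (k + 1)) (fun i => d (σ (Fin.castAdd l i)))
                (fun i => x (σ (Fin.castAdd l i)))))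
            (fun j : Fin l => x (σ (Fin.natAdd (k + 1) j))))
      = wedgeN G (k + 1 + l) (fun i => (x i : V)) := by
    intro σ hσ
    have e3 : (mathcalN G (negG 𝒜) (k + 1)) (fun i => d (σ (Fin.castAdd l i)))
        (fun i => x (σ (Fin.castAdd l i)))
        = wedgeN G (k + 1) (fun i => (x (σ (Fin.castAdd l i)) : V)) :=
      mathcalN_apply_wedgeN G (negG 𝒜) (k + 1) _ _
    have hmem : wedgeN G (k + 1) (fun i => (x (σ (Fin.castAdd l i)) : V))
        ∈ negG 𝒜 ((∑ i : Fin (k + 1), d (σ (Fin.castAdd l i))) + 0) := by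
      rw [add_zero]
      show _ ∈ 𝒜 (-(∑ i : Fin (k + 1), d (σ (Fin.castAdd l i))))
      rw [← Finset.sum_neg_distrib]
      exact wedgeN_mem G (k + 1) (fun i => -(d (σ (Fin.castAdd l i)))) _
        (fun i => (x (σ (Fin.castAdd l i))).2)
    have e4 : ((prj (negG 𝒜) ((∑ i : Fin (k + 1), d (σ (Fin.castAdd l i))) + 0)
        (wedgeN G (k + 1) (fun i => (x (σ (Fin.castAdd l i)) : V)))) : V)
        = wedgeN G (k + 1) (fun i => (x (σ (Fin.castAdd l i)) : V)) :=
      DirectSum.decompose_of_mem_same _ hmem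
    rw [e3, mathcalN_apply_wedgeN]
    erw [coe_cons_fun (negG 𝒜)
        (Fin.cons ((∑ i : Fin (k + 1), d (σ (Fin.castAdd l i))) + 0)
          (fun j : Fin l => d (σ (Fin.natAdd (k + 1) j)))), e4]
    have hsplit : wedgeN G (l + 1)
        (Fin.cons (wedgeN G (k + 1) (fun i => (x (σ (Fin.castAdd l i)) : V)))
          (fun j : Fin l => (x (σ (Fin.natAdd (k + 1) j)) : V)))
        = wedgeN G (k + 1 + l) (fun i => (x (σ i) : V)) := by
      cases l with
      | zero => rfl
      | succ l' =>
        rw [wedgeN_cons2]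
        exact (wedgeN_split G k l' (fun i => (x (σ i) : V))).symm
    rw [hsplit]
    have hperm : wedgeN G (k + 1 + l) (fun i => (x (σ i) : V))
        = koszulSign d σ • wedgeN G (k + 1 + l) (fun i => (x i : V)) :=
      wedgeN_perm G d σ (fun i => (x i : V)) (fun i => (x i).2)
    rw [hperm, smul_smul, koszulSign_mul_self, one_smul]
  rw [Finset.sum_congr rfl key, Finset.sum_const, card_unshuffles]
  have := mathcalN_apply_wedgeN G (negG 𝒜) (k + 1 + l) d x
  show _ = ((k + 1 + l).choose (k + 1)) • (mathcalN G (negG 𝒜) (k + 1 + l)) d x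
  rw [this]

end InsertNN
section Helpers
variable {V : Type*} [AddCommGroup V] [Module ℝ V] {𝒜 : ℤ → Submodule ℝ V}

theorem mathcalN_cast (G : Gerstenhaber 𝒜) (𝒢 : ℤ → Submodule ℝ V) {m n : ℕ} (h : m = n) :
    castForm h (mathcalN G 𝒢 m) = mathcalN G 𝒢 n := by cases h; rfl

theorem insertionOp_zero_left_N (G : Gerstenhaber 𝒜) [DirectSum.Decomposition (negG 𝒜)]
    (a l : ℕ) :
    insertionOp (negG 𝒜) 0 (0 : GForm (negG 𝒜) a) (mathcalN G (negG 𝒜) (l + 1)) = 0 := by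
  funext d x
  rw [insertionOp_succ]
  unfold insertPos
  have hz : ∀ σ ∈ unshuffles a (a + l),
      koszulSign d σ •
        (mathcalN G (negG 𝒜) (l + 1))
          (Fin.cons ((∑ i : Fin a, d (σ (Fin.castAdd l i))) + 0)
            (fun j : Fin l => d (σ (Fin.natAdd a j))))
          (Fin.cons
            (prj (negG 𝒜) ((∑ i : Fin a, d (σ (Fin.castAdd l i))) + 0)
              ((0 : GForm (negG 𝒜) a) (fun i => d (σ (Fin.castAdd l i)))
                (fun i => x (σ (Fin.castAdd l i)))))
            (fun j : Fin l => x (σ (Fin.natAdd a j))))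
      = 0 := by
    intro σ hσ
    rw [mathcalN_apply_wedgeN]
    erw [coe_cons_fun (negG 𝒜)
        (Fin.cons ((∑ i : Fin a, d (σ (Fin.castAdd l i))) + 0)
          (fun j : Fin l => d (σ (Fin.natAdd a j))))]
    have h0 : ((prj (negG 𝒜) ((∑ i : Fin a, d (σ (Fin.castAdd l i))) + 0)
        ((0 : GForm (negG 𝒜) a) (fun i => d (σ (Fin.castAdd l i)))
          (fun i => x (σ (Fin.castAdd l i))))) : V) = 0 := by
      show ((prj (negG 𝒜) _ (0 : V) : _) : V) = 0
      rw [prj]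
      simp
    rw [h0, wedgeN_zero_head, smul_zero]
  rw [Finset.sum_congr rfl hz, Finset.sum_const, smul_zero]
  rfl

/-- Evaluation of the aritywise sum of insertions of single forms. -/
theorem sum_insert_single (𝒢 : ℤ → Submodule ℝ V) [DirectSum.Decomposition 𝒢]
    {a b n : ℕ} (ha : 1 ≤ a) (hb : 1 ≤ b) (A : GForm 𝒢 a) (B : GForm 𝒢 b)
    (hBzero : ∀ a' : ℕ, insertionOp 𝒢 0 (0 : GForm 𝒢 a') B = 0) :
    ((∑ p ∈ (Finset.range (n + 2)).attach,
       castForm (by have hh : (p : ℕ) < n + 2 := Finset.mem_range.mp p.2; omega)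
         (insertionOp 𝒢 0 (singleF 𝒢 a A p.1) (singleF 𝒢 b B (n + 1 - p.1)))) : GForm 𝒢 n)
    = if h : n = a + b - 1 then castForm (by omega) (insertionOp 𝒢 0 A B)
      else 0 := by
  by_cases h : n = a + b - 1
  · rw [dif_pos h]
    have hmem : a ∈ Finset.range (n + 2) := Finset.mem_range.mpr (by omega)
    refine (Finset.sum_eq_single_of_mem (⟨a, hmem⟩ : {x // x ∈ Finset.range (n + 2)})
      (Finset.mem_attach _ _) ?side).trans ?main
    case side =>
      intro p _ hne
      have hp1 : (p : ℕ) ≤ n + 1 := by have := Finset.mem_range.mp p.2; omega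
      have hpa : (p : ℕ) ≠ a := fun hh => hne (Subtype.ext hh)
      have hLb : n + 1 - (p : ℕ) ≠ b := by omega
      rw [singleF_ne B hLb, insertionOp_zero_right, castForm_zero]
    case main =>
      have hcoe : ((⟨a, hmem⟩ : {x // x ∈ Finset.range (n + 2)}) : ℕ) = a := rfl
      rw [singleF_eq A hcoe,
        singleF_eq B (show n + 1 - ((⟨a, hmem⟩ : {x // x ∈ Finset.range (n + 2)}) : ℕ) = b
          from by show n + 1 - a = b; omega),
        castForm_self, insertionOp_cast_right, castForm_trans]
  · rw [dif_neg h]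
    apply Finset.sum_eq_zero
    intro p _
    have hp1 : (p : ℕ) ≤ n + 1 := by have := Finset.mem_range.mp p.2; omega
    by_cases hLb : n + 1 - (p : ℕ) = b
    · have hpa : (p : ℕ) ≠ a := by omega
      rw [singleF_ne A hpa, singleF_eq B hLb, insertionOp_cast_right, hBzero,
        castForm_zero, castForm_zero]
    · rw [singleF_ne B hLb, insertionOp_zero_right, castForm_zero]

theorem choose_scalar (k l : ℕ) :
    (((k + 1 + l).choose (k + 1) : ℝ)) - (((l + 1 + k).choose (l + 1) : ℝ))
      = ((((l + 1 : ℕ)) : ℝ) - (((k + 1 : ℕ)) : ℝ)) * ((Nat.factorial (k + 1 + (l + 1) - 1)) : ℝ)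
        / (((Nat.factorial (k + 1)) : ℝ) * ((Nat.factorial (l + 1)) : ℝ)) := by
  have h1n := Nat.choose_mul_factorial_mul_factorial (show k + 1 ≤ k + 1 + l by omega)
  have h2n := Nat.choose_mul_factorial_mul_factorial (show l + 1 ≤ l + 1 + k by omega)
  rw [show k + 1 + l - (k + 1) = l by omega] at h1n
  rw [show l + 1 + k - (l + 1) = k by omega] at h2n
  have hacomm : l + 1 + k = k + 1 + l := by omega
  rw [hacomm] at h2n
  have h1 : ((k + 1 + l).choose (k + 1) : ℝ) * (Nat.factorial (k + 1) : ℝ)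
      * (Nat.factorial l : ℝ) = (Nat.factorial (k + 1 + l) : ℝ) := by exact_mod_cast h1n
  have h2 : ((k + 1 + l).choose (l + 1) : ℝ) * (Nat.factorial (l + 1) : ℝ)
      * (Nat.factorial k : ℝ) = (Nat.factorial (k + 1 + l) : ℝ) := by exact_mod_cast h2n
  have hl : (Nat.factorial (l + 1) : ℝ) = ((l : ℝ) + 1) * (Nat.factorial l : ℝ) := by
    rw [Nat.factorial_succ]; push_cast; ring
  have hk : (Nat.factorial (k + 1) : ℝ) = ((k : ℝ) + 1) * (Nat.factorial k : ℝ) := by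
    rw [Nat.factorial_succ]; push_cast; ring
  rw [show k + 1 + (l + 1) - 1 = k + 1 + l by omega, hacomm]
  have hkne : (Nat.factorial (k + 1) : ℝ) ≠ 0 := by
    exact_mod_cast Nat.factorial_ne_zero (k + 1)
  have hlne : (Nat.factorial (l + 1) : ℝ) ≠ 0 := by
    exact_mod_cast Nat.factorial_ne_zero (l + 1)
  rw [eq_div_iff (by positivity)]
  push_cast at h1 h2 hl hk ⊢
  linear_combination ((l : ℝ) + 1) * h1
    + ((((k + 1 + l).choose (k + 1) : ℝ)) * ((Nat.factorial (k + 1) : ℝ))) * hl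
    - ((k : ℝ) + 1) * h2
    - ((((k + 1 + l).choose (l + 1) : ℝ)) * ((Nat.factorial (l + 1) : ℝ))) * hk

end Helpers
/-- `[𝒩_i, 𝒩_j]_RN = ((j-i)(i+j-1)!/(i!·j!)) 𝒩_{i+j-1}` for the wedge
product forms `𝒩_k(P_1,…,P_k) = P_1 ∧ ⋯ ∧ P_k` on the graded vector space `E` with
`E_{-k} := A^k`, for any Gerstenhaber algebra `A`. -/
theorem rnBracket_mathcalN_mathcalN
    {V : Type*} [AddCommGroup V] [Module ℝ V] {𝒜 : ℤ → Submodule ℝ V}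
    (G : Gerstenhaber 𝒜) [DirectSum.Decomposition (negG 𝒜)]
    (i j : ℕ) (hi : 1 ≤ i) (hj : 1 ≤ j) :
    rnBracketM (negG 𝒜) 0 0 (singleF (negG 𝒜) i (mathcalN G (negG 𝒜) i))
        (singleF (negG 𝒜) j (mathcalN G (negG 𝒜) j))
      = ((((j : ℝ) - (i : ℝ)) * (Nat.factorial (i + j - 1) : ℝ)) /
            ((Nat.factorial i : ℝ) * (Nat.factorial j : ℝ))) •
          singleF (negG 𝒜) (i + j - 1) (mathcalN G (negG 𝒜) (i + j - 1)) := by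
  obtain ⟨k, rfl⟩ : ∃ k, i = k + 1 := ⟨i - 1, by omega⟩
  obtain ⟨l, rfl⟩ : ∃ l, j = l + 1 := ⟨j - 1, by omega⟩
  funext n
  simp only [rnBracketM]
  rw [sum_insert_single (negG 𝒜) (by omega) (by omega)
      (mathcalN G (negG 𝒜) (k + 1)) (mathcalN G (negG 𝒜) (l + 1))
      (fun a' => insertionOp_zero_left_N G a' l),
    sum_insert_single (negG 𝒜) (by omega) (by omega)
      (mathcalN G (negG 𝒜) (l + 1)) (mathcalN G (negG 𝒜) (k + 1))
      (fun a' => insertionOp_zero_left_N G a' k)]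
  have hsign : ((-1 : ℤ) ^ ((0 : ℤ) * 0).natAbs) = 1 := by decide
  rw [hsign, one_smul]
  by_cases hn : n = k + 1 + (l + 1) - 1
  · rw [dif_pos hn, dif_pos (show n = l + 1 + (k + 1) - 1 by omega)]
    rw [insert_NN G k l, insert_NN G l k]
    rw [castForm_nsmul, castForm_nsmul]
    have ec1 : castForm (show k + 1 + (l + 1) - 1 = n by omega)
        (mathcalN G (negG 𝒜) (k + 1 + l)) = mathcalN G (negG 𝒜) n :=
      mathcalN_cast G (negG 𝒜) (by omega)
    have ec2 : castForm (show l + 1 + (k + 1) - 1 = n by omega)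
        (mathcalN G (negG 𝒜) (l + 1 + k)) = mathcalN G (negG 𝒜) n :=
      mathcalN_cast G (negG 𝒜) (by omega)
    rw [ec1, ec2]
    rw [Pi.smul_apply, singleF_eq (mathcalN G (negG 𝒜) (k + 1 + (l + 1) - 1)) hn,
      mathcalN_cast]
    funext d x
    rw [Pi.sub_apply]
    simp only [Pi.smul_apply]
    rw [← Nat.cast_smul_eq_nsmul ℝ, ← Nat.cast_smul_eq_nsmul ℝ, ← sub_smul, Pi.smul_apply]
    congr 1
    exact choose_scalar k l
  · rw [dif_neg hn, dif_neg (show ¬(n = l + 1 + (k + 1) - 1) by omega)]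
    rw [Pi.smul_apply, singleF_ne _ hn, smul_zero, sub_zero]
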